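/- For m ≥ 2 let L be the m×m path-graph Laplacian: L_{00} = L_{m−1,m−1} = 1, L_{kk} = 2 for 1 ≤ k ≤ m−2, L_{k,k+1} = L_{k+1,k} = −1, all other entries 0. For z ∈ ℂ∖{0} define Δ(z) = (2 − z − z⁻¹)·I_m + L and P(z) = det Δ(z) (the characteristic polynomial of the square-grid strip graph of width m with unit conductances). Then the zeros of P are exactly: a zero of multiplicity 2 at z = 1, together with 2(m−1) simple zeros {λ_j, λ_j⁻¹ : j = 1,…,m−1}, where λ_j > 1 is the larger root of the quadratic λ² − (4 − 2cos(jπ/m))λ + 1 = 0. In particular all zeros of P are real, positive, and distinct except for the double zero at z = 1, and they satisfy P(z) = P(1/z). -/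

import Mathlib

open Matrix BigOperators

namespace StripAux
open Polynomial Complex Finset

variable {R : Type*} [CommRing R]

def tri (d : ℕ → R) (n : ℕ) : Matrix (Fin n) (Fin n) R :=
  Matrix.of fun i j => (if (i:ℕ) = (j:ℕ) then d i else 0)
    + (if (i:ℕ)+1 = (j:ℕ) ∨ (j:ℕ)+1 = (i:ℕ) then -1 else 0)

lemma tri_congr {d1 d2 : ℕ → R} {n : ℕ} (h : ∀ k < n, d1 k = d2 k) : tri d1 n = tri d2 n := by
  ext i j
  simp only [tri, Matrix.of_apply]
  congr 1
  by_cases hij : (i:ℕ) = (j:ℕ)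
  · rw [if_pos hij, if_pos hij, h i i.isLt]
  · rw [if_neg hij, if_neg hij]

lemma tri_map {S : Type*} [CommRing S] (f : R →+* S) (d : ℕ → R) (n : ℕ) :
    (tri d n).map f = tri (fun k => f (d k)) n := by
  ext i j
  simp only [tri, Matrix.map_apply, Matrix.of_apply, map_add, apply_ite f, map_zero, map_neg,
    _root_.map_one]

lemma tri_apply_eq_zero (d : ℕ → R) (n : ℕ) (i j : Fin n)
    (h1 : (i:ℕ) ≠ j) (h2 : (i:ℕ)+1 ≠ j) (h3 : (j:ℕ)+1 ≠ i) : tri d n i j = 0 := by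
  simp only [tri, Matrix.of_apply, if_neg h1, if_neg (not_or.mpr ⟨h2, h3⟩), add_zero]

lemma tri_rec (d : ℕ → R) (n : ℕ) :
    (tri d (n+2)).det
      = d 0 * (tri (fun k => d (k+1)) (n+1)).det - (tri (fun k => d (k+2)) n).det := by
  have e00 : tri d (n+2) 0 0 = d 0 := by simp [tri]
  have e01 : tri d (n+2) 0 (Fin.succ 0) = -1 := by simp [tri]
  have hminor0 : (tri d (n+2)).submatrix Fin.succ (Fin.succAbove 0)
      = tri (fun k => d (k+1)) (n+1) := by
    ext i j
    simp only [Matrix.submatrix_apply, Fin.zero_succAbove, tri, Matrix.of_apply, Fin.val_succ]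
    have h : (i:ℕ) + 1 = (j:ℕ) + 1 ↔ (i:ℕ) = (j:ℕ) := by omega
    have h2 : (i:ℕ) + 1 + 1 = (j:ℕ) + 1 ↔ (i:ℕ) + 1 = (j:ℕ) := by omega
    have h3 : (j:ℕ) + 1 + 1 = (i:ℕ) + 1 ↔ (j:ℕ) + 1 = (i:ℕ) := by omega
    simp only [h, h2, h3]
  have hB : ((tri d (n+2)).submatrix Fin.succ (Fin.succ 0).succAbove).det
      = - (tri (fun k => d (k+2)) n).det := by
    rw [Matrix.det_succ_column_zero, Fin.sum_univ_succ]
    have hBz : ∀ i : Fin n,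
        (tri d (n+2)).submatrix Fin.succ (Fin.succ 0).succAbove i.succ 0 = 0 := by
      intro i
      simp only [Matrix.submatrix_apply, Fin.succ_succAbove_zero]
      apply tri_apply_eq_zero <;> simp [Fin.val_succ] <;> omega
    have hB00 : (tri d (n+2)).submatrix Fin.succ (Fin.succ 0).succAbove 0 0 = -1 := by
      simp only [Matrix.submatrix_apply, Fin.succ_succAbove_zero]
      simp [tri]
    have hminor : ((tri d (n+2)).submatrix Fin.succ (Fin.succ 0).succAbove).submatrix
        (Fin.succAbove 0) Fin.succ = tri (fun k => d (k+2)) n := by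
      ext i j
      simp only [Matrix.submatrix_apply, Fin.zero_succAbove, Fin.succ_succAbove_succ,
        tri, Matrix.of_apply, Fin.val_succ]
      have h : (i:ℕ) + 1 + 1 = (j:ℕ) + 1 + 1 ↔ (i:ℕ) = (j:ℕ) := by omega
      have h2 : (i:ℕ) + 1 + 1 + 1 = (j:ℕ) + 1 + 1 ↔ (i:ℕ) + 1 = (j:ℕ) := by omega
      have h3 : (j:ℕ) + 1 + 1 + 1 = (i:ℕ) + 1 + 1 ↔ (j:ℕ) + 1 = (i:ℕ) := by omega
      simp only [h, h2, h3, show (i:ℕ)+1+1 = (i:ℕ)+2 from rfl]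
    rw [Finset.sum_eq_zero (fun i _ => by rw [hBz i]; ring), add_zero, hB00, hminor]
    simp
  rw [show (n+2) = (n+1).succ from rfl, Matrix.det_succ_row_zero, Fin.sum_univ_succ,
    Fin.sum_univ_succ,
    Finset.sum_eq_zero (fun i _ => by
      rw [tri_apply_eq_zero d _ 0 i.succ.succ (by simp) (by simp [Fin.val_succ]) (by simp)]
      ring),
    add_zero, e00, e01, hminor0, hB]
  simp
  ring

noncomputable def vv (s : ℂ) : ℕ → ℂ
  | 0 => 1
  | 1 => s - 1
  | (n+2) => s * vv s (n+1) - vv s n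

lemma vv_closed (s w : ℂ) (hs : s * w = w^2 + 1) :
    ∀ n : ℕ, (w + 1) * w ^ n * vv s n = w ^ (2*n+1) + 1 := by
  have key : ∀ n : ℕ, (w + 1) * w ^ n * vv s n = w ^ (2*n+1) + 1 ∧
      (w + 1) * w ^ (n+1) * vv s (n+1) = w ^ (2*(n+1)+1) + 1 := by
    intro n
    induction n with
    | zero =>
      refine ⟨by simp [vv], ?_⟩
      show (w + 1) * w ^ 1 * (s - 1) = _
      linear_combination (w + 1) * hs
    | succ n ih =>
      obtain ⟨h1, h2⟩ := ih
      refine ⟨h2, ?_⟩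
      show (w + 1) * w ^ (n+2) * (s * vv s (n+1) - vv s n) = _
      linear_combination ((w+1)*w^(n+1)*(vv s (n+1)))*hs + (w^2+1)*h2 - (w^2)*h1
  exact fun n => (key n).1

lemma det_tri_last (s : ℂ) : ∀ n : ℕ,
    (tri (fun k => if k + 1 = n then s - 1 else s) n).det = vv s n := by
  have key : ∀ n : ℕ,
      (tri (fun k => if k + 1 = n then s - 1 else s) n).det = vv s n ∧
      (tri (fun k => if k + 1 = n+1 then s - 1 else s) (n+1)).det = vv s (n+1) := by
    intro n
    induction n with
    | zero =>
      constructor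
      · simp [vv, Matrix.det_fin_zero]
      · rw [Matrix.det_fin_one]
        simp [tri, vv]
    | succ n ih =>
      obtain ⟨h1, h2⟩ := ih
      refine ⟨h2, ?_⟩
      rw [show n + 1 + 1 = n + 2 from rfl, tri_rec]
      have c1 : tri (fun k => (fun k => if k + 1 = n+2 then s - 1 else s) (k+1)) (n+1)
          = tri (fun k => if k + 1 = n+1 then s - 1 else s) (n+1) :=
        tri_congr (fun k _ => by simp only []; congr 1; simp)
      have c2 : tri (fun k => (fun k => if k + 1 = n+2 then s - 1 else s) (k+2)) n
          = tri (fun k => if k + 1 = n then s - 1 else s) n :=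
        tri_congr (fun k _ => by simp only []; congr 1; simp)
      rw [c1, c2, h1, h2]
      have : (if (0:ℕ) + 1 = n + 2 then s - 1 else s) = s := by simp
      rw [this]
      rfl
  exact fun n => (key n).1

lemma det_M (s w : ℂ) (hs : s * w = w^2 + 1) (n : ℕ) :
    (w + 1) * w ^ (n+2) *
      (tri (fun k => if k = 0 ∨ k = (n+2) - 1 then s - 1 else s) (n+2)).det
      = (w - 1) * (w ^ (2*(n+2)) - 1) := by
  rw [tri_rec]
  have c1 : tri (fun k => (fun k => if k = 0 ∨ k = (n+2)-1 then s - 1 else s) (k+1)) (n+1)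
      = tri (fun k => if k + 1 = n+1 then s - 1 else s) (n+1) :=
    tri_congr (fun k hk => by simp only []; congr 1; simp)
  have c2 : tri (fun k => (fun k => if k = 0 ∨ k = (n+2)-1 then s - 1 else s) (k+2)) n
      = tri (fun k => if k + 1 = n then s - 1 else s) n :=
    tri_congr (fun k hk => by simp only []; congr 1; simp)
  rw [c1, c2, det_tri_last, det_tri_last]
  have h1 := vv_closed s w hs n
  have h2 := vv_closed s w hs (n+1)
  have d0 : (if (0:ℕ) = 0 ∨ (0:ℕ) = (n+2)-1 then s - 1 else s) = s - 1 := by simp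
  rw [d0]
  linear_combination ((w+1)*w^(n+1)*(vv s (n+1)))*hs + (w^2+1-w)*h2 - w^2*h1

lemma det_M' (s w : ℂ) (hs : s * w = w^2 + 1) (m : ℕ) (hm : 2 ≤ m) :
    (w + 1) * w ^ m *
      (tri (fun k => if k = 0 ∨ k = m - 1 then s - 1 else s) m).det
      = (w - 1) * (w ^ (2*m) - 1) := by
  obtain ⟨n, rfl⟩ : ∃ n, m = n + 2 := ⟨m - 2, by omega⟩
  exact det_M s w hs n

lemma prod_quad (m : ℕ) (hm : 1 ≤ m) (w : ℂ) :
    (w + 1) * ∏ j ∈ Finset.range m,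
        ((w - Complex.exp ((((j:ℝ) * Real.pi / (m:ℝ) : ℝ)) * Complex.I))
          * (w - (Complex.exp ((((j:ℝ) * Real.pi / (m:ℝ) : ℝ)) * Complex.I))⁻¹))
      = (w - 1) * (w ^ (2*m) - 1) := by
  have hm0 : (m:ℂ) ≠ 0 := Nat.cast_ne_zero.mpr (by omega)
  set ζ : ℂ := Complex.exp (Real.pi * Complex.I / m) with hζdef
  have hζ : IsPrimitiveRoot ζ (2*m) := by
    have h := Complex.isPrimitiveRoot_exp (2*m) (by omega)
    convert h using 2
    push_cast
    field_simp
  have hpow : ∀ j : ℕ, Complex.exp ((((j:ℝ) * Real.pi / (m:ℝ) : ℝ)) * Complex.I) = ζ ^ j := by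
    intro j
    rw [hζdef, ← Complex.exp_nat_mul]
    congr 1
    push_cast
    field_simp
  have hroot : ζ ^ (2*m) = 1 := hζ.pow_eq_one
  have hζm : ζ ^ m = -1 := by
    rw [hζdef, ← Complex.exp_nat_mul]
    have : (m:ℂ) * (Real.pi * Complex.I / m) = Real.pi * Complex.I := by field_simp
    rw [this, Complex.exp_pi_mul_I]
  have hinv : ∀ j : ℕ, j ≤ 2*m → (ζ ^ j)⁻¹ = ζ ^ (2*m - j) := by
    intro j hj
    refine inv_eq_of_mul_eq_one_right ?_
    rw [← pow_add, Nat.add_sub_cancel' hj, hroot]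
  have hfull : w ^ (2*m) - 1 = ∏ i ∈ Finset.range (2*m), (w - ζ ^ i) := by
    have h := X_pow_sub_C_eq_prod hζ (by omega : 0 < 2*m) (one_pow (2*m))
    have := congrArg (Polynomial.eval w) h
    simpa [Polynomial.eval_prod] using this
  simp only [hpow]
  -- B = prod over Ico (m+1) (2m+1)
  have hB : ∏ j ∈ Finset.range m, (w - (ζ ^ j)⁻¹)
      = ∏ i ∈ Finset.Ico (m+1) (2*m+1), (w - ζ ^ i) := by
    rw [Finset.range_eq_Ico]
    refine Finset.prod_nbij' (fun j => 2*m - j) (fun i => 2*m - i) ?_ ?_ ?_ ?_ ?_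
    · intro a ha; simp only [Finset.mem_Ico] at ha ⊢; omega
    · intro a ha; simp only [Finset.mem_Ico] at ha ⊢; omega
    · intro a ha; simp only [Finset.mem_Ico] at ha; omega
    · intro a ha; simp only [Finset.mem_Ico] at ha; omega
    · intro a ha
      simp only [Finset.mem_Ico] at ha
      rw [hinv a (by omega)]
  have hsplit1 : ∏ i ∈ Finset.Ico m (2*m+1), (w - ζ ^ i)
      = (w - ζ ^ m) * ∏ i ∈ Finset.Ico (m+1) (2*m+1), (w - ζ ^ i) :=
    Finset.prod_eq_prod_Ico_succ_bot (by omega) _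
  have hsplit2 : ∏ i ∈ Finset.Ico m (2*m+1), (w - ζ ^ i)
      = (∏ i ∈ Finset.Ico m (2*m), (w - ζ ^ i)) * (w - ζ ^ (2*m)) := by
    rw [← Finset.prod_Ico_succ_top (by omega)]
  have hsplit3 : (∏ i ∈ Finset.range m, (w - ζ ^ i)) * ∏ i ∈ Finset.Ico m (2*m), (w - ζ ^ i)
      = ∏ i ∈ Finset.range (2*m), (w - ζ ^ i) := by
    rw [Finset.range_eq_Ico, Finset.range_eq_Ico]
    exact Finset.prod_Ico_consecutive (fun i => w - ζ ^ i) (by omega : 0 ≤ m) (by omega : m ≤ 2*m)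
  rw [Finset.prod_mul_distrib, hB]
  calc (w + 1) * ((∏ j ∈ Finset.range m, (w - ζ ^ j)) * ∏ i ∈ Finset.Ico (m+1) (2*m+1), (w - ζ ^ i))
      = (∏ j ∈ Finset.range m, (w - ζ ^ j)) *
          ((w - ζ ^ m) * ∏ i ∈ Finset.Ico (m+1) (2*m+1), (w - ζ ^ i)) := by
        rw [hζm]; ring
    _ = (∏ j ∈ Finset.range m, (w - ζ ^ j)) *
          ((∏ i ∈ Finset.Ico m (2*m), (w - ζ ^ i)) * (w - ζ ^ (2*m))) := by
        rw [← hsplit1, hsplit2]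
    _ = (w - 1) * (w ^ (2*m) - 1) := by
        rw [hroot, ← mul_assoc, hsplit3, ← hfull]; ring

lemma two_cos_eq (θ : ℝ) :
    2 * ((Real.cos θ : ℝ) : ℂ)
      = Complex.exp ((θ:ℂ) * Complex.I) + (Complex.exp ((θ:ℂ) * Complex.I))⁻¹ := by
  rw [Complex.ofReal_cos, Complex.two_cos, ← Complex.exp_neg]
  ring_nf

lemma det_eq_prod (m : ℕ) (hm : 2 ≤ m) (s : ℂ) :
    (tri (fun k => if k = 0 ∨ k = m - 1 then s - 1 else s) m).det
      = ∏ j ∈ Finset.range m, (s - 2 * ((Real.cos ((j:ℝ) * Real.pi / m) : ℝ) : ℂ)) := by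
  have key : ∀ t : ℂ, t ≠ -2 →
      (tri (fun k => if k = 0 ∨ k = m - 1 then t - 1 else t) m).det
        = ∏ j ∈ Finset.range m, (t - 2 * ((Real.cos ((j:ℝ) * Real.pi / m) : ℝ) : ℂ)) := by
    intro t ht
    obtain ⟨u, hu⟩ := IsAlgClosed.exists_pow_nat_eq (k := ℂ) (t^2 - 4) zero_lt_two
    set w : ℂ := (t + u) / 2 with hw
    have hs : t * w = w^2 + 1 := by
      rw [hw]; field_simp; linear_combination -hu
    have hw0 : w ≠ 0 := by
      intro h; rw [h] at hs; simp at hs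
    have hwm1 : w ≠ -1 := by
      intro h; rw [h] at hs; apply ht; linear_combination -hs
    have hwne : (w + 1) * w ^ m ≠ 0 := by
      apply mul_ne_zero
      · intro h; apply hwm1; linear_combination h
      · exact pow_ne_zero _ hw0
    apply mul_left_cancel₀ hwne
    rw [det_M' t w hs m hm]
    refine Eq.symm ?_
    have expand : ∀ j : ℕ,
        w * (t - 2 * ((Real.cos ((j:ℝ) * Real.pi / m) : ℝ) : ℂ))
        = (w - Complex.exp ((((j:ℝ) * Real.pi / (m:ℝ) : ℝ)) * Complex.I))
          * (w - (Complex.exp ((((j:ℝ) * Real.pi / (m:ℝ) : ℝ)) * Complex.I))⁻¹) := by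
      intro j
      have h2c := two_cos_eq ((j:ℝ) * Real.pi / m)
      have hexp0 : Complex.exp (((j:ℝ) * Real.pi / m : ℝ) * Complex.I) ≠ 0 :=
        Complex.exp_ne_zero _
      have hmulinv : Complex.exp (((j:ℝ) * Real.pi / m : ℝ) * Complex.I)
          * (Complex.exp (((j:ℝ) * Real.pi / m : ℝ) * Complex.I))⁻¹ = 1 := mul_inv_cancel₀ hexp0
      linear_combination hs - w * h2c - hmulinv
    calc (w + 1) * w ^ m *
        ∏ j ∈ Finset.range m, (t - 2 * ((Real.cos ((j:ℝ) * Real.pi / m) : ℝ) : ℂ))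
        = (w+1) * ∏ j ∈ Finset.range m,
            (w * (t - 2 * ((Real.cos ((j:ℝ) * Real.pi / m) : ℝ) : ℂ))) := by
          rw [Finset.prod_mul_distrib, Finset.prod_const, Finset.card_range]
          ring
      _ = (w+1) * ∏ j ∈ Finset.range m,
            ((w - Complex.exp ((((j:ℝ) * Real.pi / (m:ℝ) : ℝ)) * Complex.I))
              * (w - (Complex.exp ((((j:ℝ) * Real.pi / (m:ℝ) : ℝ)) * Complex.I))⁻¹)) := by
          congr 1
          exact Finset.prod_congr rfl (fun j _ => expand j)
      _ = (w - 1) * (w ^ (2*m) - 1) := prod_quad m (by omega) w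
  set pX : Polynomial ℂ :=
    (tri (fun k => if k = 0 ∨ k = m - 1 then (X : ℂ[X]) - 1 else X) m).det with hpX
  set qX : Polynomial ℂ :=
    ∏ j ∈ Finset.range m, ((X : ℂ[X]) - C (2 * ((Real.cos ((j:ℝ) * Real.pi / m) : ℝ) : ℂ)))
    with hqX
  have hevalp : ∀ t : ℂ, Polynomial.eval t pX
      = (tri (fun k => if k = 0 ∨ k = m - 1 then t - 1 else t) m).det := by
    intro t
    have h0 : Polynomial.eval t pX = (Polynomial.evalRingHom t) pX := rfl
    rw [h0, hpX, RingHom.map_det (Polynomial.evalRingHom t), RingHom.mapMatrix_apply, tri_map]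
    congr 1
    funext k
    simp [apply_ite (Polynomial.evalRingHom t)]
  have hevalq : ∀ t : ℂ, Polynomial.eval t qX
      = ∏ j ∈ Finset.range m, (t - 2 * ((Real.cos ((j:ℝ) * Real.pi / m) : ℝ) : ℂ)) := by
    intro t
    rw [hqX, Polynomial.eval_prod]
    exact Finset.prod_congr rfl (fun j _ => by simp)
  have hpq : pX = qX := by
    rw [← sub_eq_zero]
    apply Polynomial.eq_zero_of_infinite_isRoot
    have hinf : ({x : ℂ | x ≠ -2}).Infinite := by
      have heq : ({x : ℂ | x ≠ -2}) = ({-2} : Set ℂ)ᶜ := by ext x; simp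
      rw [heq]
      exact Set.Finite.infinite_compl (Set.finite_singleton _)
    refine hinf.mono ?_
    intro x hx
    simp only [Set.mem_setOf_eq, Polynomial.IsRoot, Polynomial.eval_sub]
    rw [hevalp, hevalq, key x hx]
    ring
  rw [← hevalp s, ← hevalq s, hpq]


end StripAux

open StripAux

/-- Zeros of the characteristic polynomial `P(z) = det((2 - z - z⁻¹)·I + L)` of the
square-grid strip of width `m` with unit conductances (`L` the path Laplacian):
`P` is reciprocal, and its zeros are exactly a double zero at `z = 1` plus the
`2(m-1)` simple zeros `λ_j, λ_j⁻¹` where `λ_j > 1` is the larger root of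
`λ² - (4 - 2cos(jπ/m))λ + 1 = 0`; in particular all zeros are real, positive and
distinct except for the double zero at `1`. -/
theorem stmt_5 (m : ℕ) (hm : 2 ≤ m)
    (Δ : ℂ → Matrix (Fin m) (Fin m) ℂ)
    (hΔ : ∀ z : ℂ, ∀ i j : Fin m, Δ z i j =
      (if i = j then
          (2 - z - z⁻¹) + (if (i : ℕ) = 0 ∨ (i : ℕ) = m - 1 then 1 else 2)
        else 0)
      + (if (i : ℕ) + 1 = (j : ℕ) ∨ (j : ℕ) + 1 = (i : ℕ) then -1 else 0))
    (P : ℂ → ℂ) (hP : ∀ z : ℂ, P z = (Δ z).det)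
    (lam : ℕ → ℝ)
    (hlam : ∀ j ∈ Finset.Icc 1 (m - 1), 1 < lam j ∧
      lam j ^ 2 - (4 - 2 * Real.cos ((j : ℝ) * Real.pi / m)) * lam j + 1 = 0) :
    (∀ z : ℂ, z ≠ 0 → P z = P z⁻¹)
    ∧ (∀ j ∈ Finset.Icc 1 (m - 1), ∀ k ∈ Finset.Icc 1 (m - 1), j ≠ k → lam j ≠ lam k)
    ∧ (∀ z : ℂ, z ≠ 0 →
        P z = (-1 : ℂ) ^ m * (z⁻¹) ^ m * (z - 1) ^ 2 *
          ∏ j ∈ Finset.Icc 1 (m - 1), ((z - (lam j : ℂ)) * (z - ((lam j : ℝ)⁻¹ : ℂ))))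
    ∧ (∀ z : ℂ, z ≠ 0 →
        (P z = 0 ↔ z = 1 ∨ ∃ j ∈ Finset.Icc 1 (m - 1),
          z = (lam j : ℂ) ∨ z = ((lam j : ℝ)⁻¹ : ℂ))) := by
  have hm0 : (m:ℝ) ≠ 0 := Nat.cast_ne_zero.mpr (by omega)
  -- sums for lam
  have hlamsum : ∀ j ∈ Finset.Icc 1 (m-1),
      lam j + (lam j)⁻¹ = 4 - 2 * Real.cos ((j:ℝ) * Real.pi / m) := by
    intro j hj
    obtain ⟨h1, h2⟩ := hlam j hj
    have hne : lam j ≠ 0 := by nlinarith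
    field_simp
    linear_combination h2
  have hlampos : ∀ j ∈ Finset.Icc 1 (m-1), lam j ≠ 0 := by
    intro j hj
    have h1 := (hlam j hj).1
    nlinarith
  -- part 2
  have part2 : ∀ j ∈ Finset.Icc 1 (m - 1), ∀ k ∈ Finset.Icc 1 (m - 1),
      j ≠ k → lam j ≠ lam k := by
    intro j hj k hk hjk heq
    obtain ⟨hj1, hj2⟩ := hlam j hj
    obtain ⟨hk1, hk2⟩ := hlam k hk
    rw [← heq] at hk2
    have hne : lam j ≠ 0 := hlampos j hj
    have hcos : Real.cos ((j:ℝ) * Real.pi / m) = Real.cos ((k:ℝ) * Real.pi / m) := by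
      have h3 : (Real.cos ((k:ℝ) * Real.pi / m) - Real.cos ((j:ℝ) * Real.pi / m))
          * (2 * lam j) = 0 := by linear_combination hk2 - hj2
      rcases mul_eq_zero.mp h3 with h | h
      · linarith
      · exfalso; apply hne; linarith
    simp only [Finset.mem_Icc] at hj hk
    have hθj : (j:ℝ) * Real.pi / m ∈ Set.Icc 0 Real.pi := by
      constructor
      · positivity
      · rw [div_le_iff₀ (by positivity)]
        have : (j:ℝ) ≤ m := by exact_mod_cast Nat.le_of_lt_succ (by omega)
        nlinarith [Real.pi_pos]
    have hθk : (k:ℝ) * Real.pi / m ∈ Set.Icc 0 Real.pi := by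
      constructor
      · positivity
      · rw [div_le_iff₀ (by positivity)]
        have : (k:ℝ) ≤ m := by exact_mod_cast Nat.le_of_lt_succ (by omega)
        nlinarith [Real.pi_pos]
    have := Real.injOn_cos hθj hθk hcos
    rw [div_left_inj' hm0, mul_left_inj' Real.pi_ne_zero] at this
    exact hjk (by exact_mod_cast this)
  -- part 3
  have part3 : ∀ z : ℂ, z ≠ 0 →
      P z = (-1 : ℂ) ^ m * (z⁻¹) ^ m * (z - 1) ^ 2 *
        ∏ j ∈ Finset.Icc 1 (m - 1), ((z - (lam j : ℂ)) * (z - ((lam j : ℝ)⁻¹ : ℂ))) := by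
    intro z hz
    set s : ℂ := 4 - z - z⁻¹ with hs
    have hdelta : Δ z = tri (fun k => if k = 0 ∨ k = m-1 then s - 1 else s) m := by
      ext i j
      rw [hΔ, tri]
      simp only [Matrix.of_apply]
      congr 1
      by_cases hij : (i:ℕ) = (j:ℕ)
      · rw [if_pos (Fin.ext hij), if_pos hij]
        by_cases hc : (i:ℕ) = 0 ∨ (i:ℕ) = m - 1
        · rw [if_pos hc, if_pos hc, hs]; ring
        · rw [if_neg hc, if_neg hc, hs]; ring
      · rw [if_neg (fun hh => hij (congrArg Fin.val hh)), if_neg hij]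
    have hdet : P z = ∏ j ∈ Finset.range m,
        (s - 2 * ((Real.cos ((j:ℝ) * Real.pi / m) : ℝ) : ℂ)) := by
      rw [hP, hdelta, det_eq_prod m hm s]
    have hsplitset : Finset.range m = insert 0 (Finset.Icc 1 (m-1)) := by
      ext x; simp only [Finset.mem_range, Finset.mem_insert, Finset.mem_Icc]; omega
    have h0notin : (0:ℕ) ∉ Finset.Icc 1 (m-1) := by simp
    have hterm0 : s - 2 * ((Real.cos (((0:ℕ):ℝ) * Real.pi / m) : ℝ) : ℂ)
        = (-z⁻¹) * (z-1)^2 := by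
      have : (((0:ℕ):ℝ) * Real.pi / m) = 0 := by simp
      rw [this, Real.cos_zero, hs]
      push_cast
      field_simp
      ring
    have htermj : ∀ j ∈ Finset.Icc 1 (m-1),
        s - 2 * ((Real.cos ((j:ℝ) * Real.pi / m) : ℝ) : ℂ)
          = (-z⁻¹) * ((z - (lam j : ℂ)) * (z - ((lam j : ℝ)⁻¹ : ℂ))) := by
      intro j hj
      have hsumC : (lam j : ℂ) + ((lam j)⁻¹ : ℝ)
          = 4 - 2 * ((Real.cos ((j:ℝ) * Real.pi / m) : ℝ) : ℂ) := by
        exact_mod_cast congrArg (fun x : ℝ => (x : ℂ)) (hlamsum j hj)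
      have hprodC : (lam j : ℂ) * (((lam j)⁻¹ : ℝ) : ℂ) = 1 := by
        rw [← Complex.ofReal_mul, mul_inv_cancel₀ (hlampos j hj)]
        simp
      have hzz : z * z⁻¹ = 1 := mul_inv_cancel₀ hz
      rw [hs, show ((lam j : ℝ)⁻¹ : ℂ) = (((lam j)⁻¹ : ℝ) : ℂ) from by push_cast; ring]
      linear_combination (z + 2*((Real.cos ((j:ℝ) * Real.pi / m) : ℝ) : ℂ) - 4) * hzz
        + (-(z*z⁻¹)) * hsumC + z⁻¹ * hprodC
    have hcard : (Finset.Icc 1 (m-1)).card = m - 1 := by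
      rw [Nat.card_Icc]; omega
    rw [hdet, hsplitset, Finset.prod_insert h0notin, hterm0,
      Finset.prod_congr rfl htermj, Finset.prod_mul_distrib, Finset.prod_const, hcard]
    have hpow : (-z⁻¹) * (-z⁻¹) ^ (m-1) = (-1:ℂ)^m * (z⁻¹)^m := by
      rw [← pow_succ']
      have : m - 1 + 1 = m := by omega
      rw [this, neg_pow]
    rw [← mul_assoc]
    rw [show (-z⁻¹) * (z-1)^2 * (-z⁻¹)^(m-1) = ((-z⁻¹) * (-z⁻¹)^(m-1)) * (z-1)^2 by ring,
      hpow]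
  refine ⟨?_, part2, part3, ?_⟩
  · intro z hz
    rw [hP, hP]
    congr 1
    ext i j
    rw [hΔ, hΔ, inv_inv]
    congr 2
    ring
  · intro z hz
    rw [part3 z hz]
    have h1 : ((-1:ℂ)^m) ≠ 0 := by
      apply pow_ne_zero; norm_num
    have h2 : ((z⁻¹:ℂ)^m) ≠ 0 := pow_ne_zero _ (inv_ne_zero hz)
    constructor
    · intro h
      rcases mul_eq_zero.mp h with h | h
      · rcases mul_eq_zero.mp h with h | h
        · rcases mul_eq_zero.mp h with h | h
          · exact absurd h h1
          · exact absurd h h2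
        · left
          have := pow_eq_zero_iff (n := 2) (by norm_num) |>.mp h
          linear_combination this
      · right
        obtain ⟨j, hj, hj0⟩ := Finset.prod_eq_zero_iff.mp h
        refine ⟨j, hj, ?_⟩
        rcases mul_eq_zero.mp hj0 with h | h
        · left; linear_combination h
        · right; linear_combination h
    · intro h
      rcases h with h | ⟨j, hj, h⟩
      · rw [h]
        ring
      · have : (z - (lam j : ℂ)) * (z - ((lam j : ℝ)⁻¹ : ℂ)) = 0 := by
          rcases h with h | h
          · rw [h]; ring
          · rw [h]; ring
        rw [Finset.prod_eq_zero hj this]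
        ring
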